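/- For every non-negative integer d, the number of 2×2 matrices with non-negative integer entries whose entries sum to 2d+1, counted up to permutations of the rows and of the columns, equals (d+1)(d+2)(2d+3)/6, i.e., equals the sum of squares 0² + 1² + ⋯ + (d+1)². -/

import Mathlib

namespace MatCountAux

abbrev X (n : ℕ) := {A : Matrix (Fin 2) (Fin 2) ℕ // ∑ i, ∑ j, A i j = n}

def r (n : ℕ) (A B : X n) : Prop :=
  ∃ σ τ : Equiv.Perm (Fin 2),
    ∀ i j, (B : Matrix (Fin 2) (Fin 2) ℕ) i j = (A : Matrix (Fin 2) (Fin 2) ℕ) (σ i) (τ j)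

lemma r_equiv (n : ℕ) : Equivalence (r n) where
  refl A := ⟨1, 1, fun i j => rfl⟩
  symm := by
    rintro A B ⟨σ, τ, h⟩
    exact ⟨σ⁻¹, τ⁻¹, fun i j => by rw [h]; simp⟩
  trans := by
    rintro A B C ⟨σ, τ, h⟩ ⟨σ', τ', h'⟩
    exact ⟨σ * σ', τ * τ', fun i j => by rw [h', h]; rfl⟩

instance setoidX (n : ℕ) : Setoid (X n) := ⟨r n, r_equiv n⟩

noncomputable instance (n : ℕ) (A : X n) : DecidablePred (fun B => r n B A) := fun B =>
  haveI := Classical.propDecidable; decidable_of_iff (∃ σ τ : Equiv.Perm (Fin 2),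
    ∀ i j, (A : Matrix (Fin 2) (Fin 2) ℕ) i j = (B : Matrix (Fin 2) (Fin 2) ℕ) (σ i) (τ j))
    Iff.rfl

noncomputable instance (n : ℕ) : DecidableRel ((· ≈ ·) : X n → X n → Prop) := fun A B =>
  haveI := Classical.propDecidable; decidable_of_iff (∃ σ τ : Equiv.Perm (Fin 2),
    ∀ i j, (B : Matrix (Fin 2) (Fin 2) ℕ) i j = (A : Matrix (Fin 2) (Fin 2) ℕ) (σ i) (τ j))
    Iff.rfl

noncomputable def eX (n : ℕ) : Sym (Fin 2 × Fin 2) n ≃ X n :=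
  (Sym.equivNatSumOfFintype (Fin 2 × Fin 2) n).trans <|
    (Equiv.curry (Fin 2) (Fin 2) ℕ).subtypeEquiv fun f => by
      rw [Fintype.sum_prod_type]; rfl

noncomputable instance fintypeX (n : ℕ) : Fintype (X n) := Fintype.ofEquiv _ (eX n)

lemma card_X (n : ℕ) : Fintype.card (X n) = (n + 3).choose 3 := by
  rw [← Fintype.card_congr (eX n), Sym.card_sym_eq_multichoose, Nat.multichoose_eq]
  have h2 : Fintype.card (Fin 2 × Fin 2) = 4 := by simp
  rw [h2]
  rw [show 4 + n - 1 = n + 3 by omega, ← Nat.choose_symm (show 3 ≤ n + 3 by omega),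
    show n + 3 - 3 = n by omega]

lemma perm2 : ∀ σ : Equiv.Perm (Fin 2), σ = 1 ∨ σ = Equiv.swap 0 1 := by decide

lemma stab {d : ℕ} (A : X (2 * d + 1)) (σ τ : Equiv.Perm (Fin 2))
    (h : ∀ i j, (A : Matrix (Fin 2) (Fin 2) ℕ) i j
      = (A : Matrix (Fin 2) (Fin 2) ℕ) (σ i) (τ j)) : σ = 1 ∧ τ = 1 := by
  have hs := A.2
  rw [Fin.sum_univ_two, Fin.sum_univ_two, Fin.sum_univ_two] at hs
  have h00 := h 0 0; have h01 := h 0 1; have h10 := h 1 0; have h11 := h 1 1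
  rcases perm2 σ with rfl | rfl <;> rcases perm2 τ with rfl | rfl <;>
    simp [Equiv.swap_apply_left, Equiv.swap_apply_right] at h00 h01 h10 h11 <;>
    [skip; omega; omega; omega] <;> exact ⟨rfl, rfl⟩

noncomputable def φ {d : ℕ} (A : X (2 * d + 1)) (p : Equiv.Perm (Fin 2) × Equiv.Perm (Fin 2)) :
    {B : X (2 * d + 1) // r (2 * d + 1) B A} :=
  ⟨⟨fun i j => (A : Matrix (Fin 2) (Fin 2) ℕ) (p.1 i) (p.2 j), by
      have h1 : ∀ i, ∑ j, (A : Matrix (Fin 2) (Fin 2) ℕ) (p.1 i) (p.2 j)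
          = ∑ j, (A : Matrix (Fin 2) (Fin 2) ℕ) (p.1 i) j := fun i =>
        Equiv.sum_comp p.2 ((A : Matrix (Fin 2) (Fin 2) ℕ) (p.1 i))
      simp_rw [h1]
      rw [Equiv.sum_comp p.1 (fun i => ∑ j, (A : Matrix (Fin 2) (Fin 2) ℕ) i j)]
      exact A.2⟩,
    ⟨p.1⁻¹, p.2⁻¹, fun i j => by simp⟩⟩

lemma φ_bij {d : ℕ} (A : X (2 * d + 1)) : Function.Bijective (φ A) := by
  constructor
  · rintro ⟨σ, τ⟩ ⟨σ', τ'⟩ hpq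
    have h : ∀ i j, (A : Matrix (Fin 2) (Fin 2) ℕ) (σ i) (τ j)
        = (A : Matrix (Fin 2) (Fin 2) ℕ) (σ' i) (τ' j) := by
      intro i j
      have h0 : ((φ A (σ, τ)).1 : Matrix (Fin 2) (Fin 2) ℕ)
          = ((φ A (σ', τ')).1 : Matrix (Fin 2) (Fin 2) ℕ) := by rw [hpq]
      exact congrFun (congrFun h0 i) j
    have h2 : ∀ i j, (A : Matrix (Fin 2) (Fin 2) ℕ) i j
        = (A : Matrix (Fin 2) (Fin 2) ℕ) ((σ' * σ⁻¹) i) ((τ' * τ⁻¹) j) := by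
      intro i j
      have := h (σ⁻¹ i) (τ⁻¹ j)
      simpa using this
    obtain ⟨hσ, hτ⟩ := stab A _ _ h2
    rw [mul_inv_eq_one] at hσ hτ
    simp [Prod.ext_iff, hσ, hτ]
  · rintro ⟨B, σ, τ, hB⟩
    refine ⟨(σ⁻¹, τ⁻¹), ?_⟩
    apply Subtype.ext; apply Subtype.ext
    funext i j
    show (A : Matrix (Fin 2) (Fin 2) ℕ) (σ⁻¹ i) (τ⁻¹ j) = _
    rw [hB (σ⁻¹ i) (τ⁻¹ j)]
    simp

lemma card_fiber {d : ℕ} (A : X (2 * d + 1)) :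
    Fintype.card {B : X (2 * d + 1) // r (2 * d + 1) B A} = 4 := by
  rw [← Fintype.card_congr (Equiv.ofBijective (φ A) (φ_bij A))]
  simp [Fintype.card_perm]

lemma card_total (d : ℕ) :
    Fintype.card (X (2 * d + 1)) = 4 * Fintype.card (Quotient (setoidX (2 * d + 1))) := by
  rw [Fintype.card_congr (Equiv.sigmaFiberEquiv (Quotient.mk (setoidX (2 * d + 1)))).symm,
    Fintype.card_sigma]
  have h : ∀ q : Quotient (setoidX (2 * d + 1)),
      Fintype.card {x // Quotient.mk (setoidX (2 * d + 1)) x = q} = 4 := by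
    intro q
    obtain ⟨a, rfl⟩ := q.exists_rep
    have e : {x : X (2 * d + 1) // Quotient.mk (setoidX (2 * d + 1)) x
          = Quotient.mk (setoidX (2 * d + 1)) a} ≃ {x // r (2 * d + 1) x a} :=
      Equiv.subtypeEquivRight (fun x => Quotient.eq)
    rw [Fintype.card_congr e]
    exact card_fiber a
  simp only [h, Finset.sum_const, Finset.card_univ, smul_eq_mul]
  rw [mul_comm]

lemma sumsq (d : ℕ) :
    (∑ i ∈ Finset.range (d + 2), i ^ 2) * 6 = (d + 1) * (d + 2) * (2 * d + 3) := by
  induction d with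
  | zero => decide
  | succ m ih =>
    rw [show m + 1 + 2 = (m + 2) + 1 from rfl, Finset.sum_range_succ, add_mul, ih]
    ring

lemma choose3 (m : ℕ) : (m + 3).choose 3 * 6 = (m + 3) * (m + 2) * (m + 1) := by
  have h := Nat.choose_mul_factorial_mul_factorial (show 3 ≤ m + 3 by omega)
  rw [show m + 3 - 3 = m by omega] at h
  have hf : (m + 3).factorial = (m + 3) * (m + 2) * (m + 1) * m.factorial := by
    simp [show m + 3 = m + 1 + 1 + 1 from rfl, Nat.factorial_succ]; ring
  rw [hf, show (3 : ℕ).factorial = 6 from rfl] at h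
  exact Nat.eq_of_mul_eq_mul_right (Nat.factorial_pos m) h

end MatCountAux

/-- The number of `2 × 2` matrices with non-negative integer entries whose entries
sum to `d`, counted up to permutations of the rows and of the columns (i.e. the
number of orbits under the action of `Sym(2) × Sym(2)`). -/
noncomputable def matCount (d : ℕ) : ℕ :=
  Nat.card (Quot fun A B : {A : Matrix (Fin 2) (Fin 2) ℕ // ∑ i, ∑ j, A i j = d} =>
    ∃ σ τ : Equiv.Perm (Fin 2),
      ∀ i j, (B : Matrix (Fin 2) (Fin 2) ℕ) i j = (A : Matrix (Fin 2) (Fin 2) ℕ) (σ i) (τ j))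

open MatCountAux in
lemma matCount_eq (n : ℕ) : matCount n = Fintype.card (Quotient (setoidX n)) := by
  show Nat.card (Quotient (setoidX n)) = _
  exact Nat.card_eq_fintype_card

/-- The number of non-negative integer `2 × 2` matrices whose entries sum to
`2d + 1`, counted up to row and column permutations, equals
`(d+1)(d+2)(2d+3)/6 = 0² + 1² + ⋯ + (d+1)²`. -/
theorem matCount_odd (d : ℕ) :
    matCount (2 * d + 1) = (d + 1) * (d + 2) * (2 * d + 3) / 6 ∧
    matCount (2 * d + 1) = ∑ i ∈ Finset.range (d + 2), i ^ 2 := by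
  have h1 := MatCountAux.card_total d
  have h2 := MatCountAux.card_X (2 * d + 1)
  have h3 := MatCountAux.choose3 (2 * d + 1)
  have h4 := MatCountAux.sumsq d
  have h5 : (2 * d + 1 + 3) * (2 * d + 1 + 2) * (2 * d + 1 + 1)
      = 4 * ((d + 1) * (d + 2) * (2 * d + 3)) := by ring
  rw [matCount_eq]
  omega
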